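/- Every 2-store-regular set of level-2 counter configurations is E-regular: if a set C of configurations is accepted by a (deterministic) 2-store automaton, then the set of tree encodings { E(c) : c ∈ C } is a regular tree language. -/

import Mathlib

/-! Binary trees, tree automata, the tree encoding `E` of level-2 counter
configurations, and (alternating) 2-store automata. -/

namespace Enc

/-- Binary trees with node labels in `α` (`nil` is the empty tree). -/
inductive BTree (α : Type) where
  | nil : BTree α
  | node (a : α) (l r : BTree α) : BTree α

/-- A (nondeterministic, bottom-up) finite tree automaton with states `St`. -/
structure TreeAut (α St : Type) where
  leaf : Set St
  trans : α → St → St → Set St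
  accept : Set St

/-- Evaluation relation of a tree automaton. -/
inductive TreeAutEval {α St : Type} (A : TreeAut α St) : BTree α → St → Prop
  | nil {s : St} : s ∈ A.leaf → TreeAutEval A .nil s
  | node {a : α} {l r : BTree α} {sl sr s : St} :
      TreeAutEval A l sl → TreeAutEval A r sr → s ∈ A.trans a sl sr →
      TreeAutEval A (.node a l r) s

def TreeAut.Accepts {α St : Type} (A : TreeAut α St) (t : BTree α) : Prop :=
  ∃ s ∈ A.accept, TreeAutEval A t s

/-- A set of trees is regular iff it is recognized by a tree automaton with a
finite state set. -/
def TreeRegular {α : Type} (T : Set (BTree α)) : Prop :=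
  ∃ (St : Type) (_ : Fintype St) (A : TreeAut α St), T = { t | A.Accepts t }

/-- The tree encoding `E` of a level-2 storage `p ∈ (Σ × ℕ)⁺` (as a relation;
`bot` is the designated symbol `⊥` labelling inner nodes):
`E(∅) = ∅`; if the first counter is `0` then `E((σ,0)·p_r) = ⊥(σ, E(p_r))`;
otherwise split `p` into the maximal prefix `p_l` with all counters `≥ 1`
(decremented) and the rest `p_r`, and `E(p) = ⊥(E(p_l), E(p_r))`. -/
inductive Encodes {Sig Q : Type} (bot : Sig) :
    List (Sig × ℕ) → BTree (Sig ⊕ Q) → Prop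
  | nil : Encodes bot [] .nil
  | zero {σ : Sig} {pr : List (Sig × ℕ)} {t : BTree (Sig ⊕ Q)} :
      Encodes bot pr t →
      Encodes bot ((σ, 0) :: pr)
        (.node (.inl bot) (.node (.inl σ) .nil .nil) t)
  | pos {pl pr : List (Sig × ℕ)} {tl tr : BTree (Sig ⊕ Q)} :
      pl ≠ [] → (∀ e ∈ pl, 1 ≤ e.2) →
      (∀ x, pr.head? = some x → x.2 = 0) →
      Encodes bot (pl.map (fun e => (e.1, e.2 - 1))) tl →
      Encodes bot pr tr →
      Encodes bot (pl ++ pr) (.node (.inl bot) tl tr)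

/-- Encoding of a configuration `(q,p)`: the tree `q(E(p), ∅)`. -/
def EncodesCfg {Sig Q : Type} (bot : Sig) (c : Q × List (Sig × ℕ))
    (t : BTree (Sig ⊕ Q)) : Prop :=
  ∃ tp, Encodes bot c.2 tp ∧ t = .node (.inr c.1) tp .nil

/-- The set of encodings of a set of configurations. -/
def EncImage {Sig Q : Type} (bot : Sig) (C : Set (Q × List (Sig × ℕ))) :
    Set (BTree (Sig ⊕ Q)) :=
  { t | ∃ c ∈ C, EncodesCfg bot c t }

/-- A deterministic finite automaton over the unary alphabet `{⊥}`. -/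
structure UnaryDFA (S : Type) where
  init : S
  next : S → S
  acc : Set S

/-- `D` accepts the word `⊥^m`. -/
def UnaryDFA.Accepts {S : Type} (D : UnaryDFA S) (m : ℕ) : Prop :=
  D.next^[m] D.init ∈ D.acc

/-- An alternating 2-store automaton: states `Q'` (partitioned into
existential (`exQ = true`) and universal states), final states, and a finite
set `T` of transitions, each with a source state, a symbol label, a unary
finite automaton checking the counter, and a destination state. -/
structure TwoStore (Q' Sig S T : Type) where
  exQ : Q' → Bool
  final : Set Q'
  src : T → Q'
  sym : T → Sig
  chk : T → UnaryDFA S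
  dst : T → Q'

/-- Accepting computations of a 2-store automaton on a storage, processed
entry by entry; at existential states one matching transition must succeed,
at universal states some transition must match and all matching transitions
must succeed. -/
inductive TwoStoreAcc {Q' Sig S T : Type} (A : TwoStore Q' Sig S T) :
    Q' → List (Sig × ℕ) → Prop
  | empty {q : Q'} : q ∈ A.final → TwoStoreAcc A q []
  | ex {q : Q'} {σ : Sig} {m : ℕ} {rest : List (Sig × ℕ)} (t : T) :
      A.exQ q = true → A.src t = q → A.sym t = σ → (A.chk t).Accepts m →
      TwoStoreAcc A (A.dst t) rest →
      TwoStoreAcc A q ((σ, m) :: rest)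
  | all {q : Q'} {σ : Sig} {m : ℕ} {rest : List (Sig × ℕ)} :
      A.exQ q = false →
      (∃ t : T, A.src t = q ∧ A.sym t = σ ∧ (A.chk t).Accepts m) →
      (∀ t : T, A.src t = q → A.sym t = σ → (A.chk t).Accepts m →
        TwoStoreAcc A (A.dst t) rest) →
      TwoStoreAcc A q ((σ, m) :: rest)

/-- A set of configurations is 2-store-regular iff it is recognized (via an
embedding of the configuration states) by an alternating 2-store automaton
with finitely many states, checking automata states and transitions. -/
def TwoStoreRegular {Q Sig : Type} (C : Set (Q × List (Sig × ℕ))) : Prop :=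
  ∃ (Q' S T : Type) (_ : Fintype Q') (_ : Fintype S) (_ : Fintype T)
    (A : TwoStore Q' Sig S T) (ι : Q → Q'),
    C = { c | TwoStoreAcc A (ι c.1) c.2 }

end Enc

namespace Enc
namespace Pf

variable {Q Q' Sig S T : Type}

abbrev Fn (Q' S T : Type) := (T → S → Prop) → Set Q' → Set Q'

abbrev St (Q' S T : Type) := (Prop × Prop × Fn Q' S T) ⊕ (Set T ⊕ Prop)

def env0 (A : TwoStore Q' Sig S T) : T → S → Prop := fun t s => s ∈ (A.chk t).acc

def shiftEnv (A : TwoStore Q' Sig S T) (θ : T → S → Prop) : T → S → Prop :=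
  fun t s => θ t ((A.chk t).next s)

inductive AccRel (A : TwoStore Q' Sig S T) (θ : T → S → Prop) (F : Set Q') :
    Q' → List (Sig × ℕ) → Prop
  | empty {q} : q ∈ F → AccRel A θ F q []
  | ex {q σ m rest} (t : T) : A.exQ q = true → A.src t = q → A.sym t = σ →
      θ t ((A.chk t).next^[m] (A.chk t).init) → AccRel A θ F (A.dst t) rest →
      AccRel A θ F q ((σ, m) :: rest)
  | all {q σ m rest} : A.exQ q = false →
      (∃ t, A.src t = q ∧ A.sym t = σ ∧ θ t ((A.chk t).next^[m] (A.chk t).init)) →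
      (∀ t, A.src t = q → A.sym t = σ → θ t ((A.chk t).next^[m] (A.chk t).init) →
        AccRel A θ F (A.dst t) rest) →
      AccRel A θ F q ((σ, m) :: rest)

def Phi (A : TwoStore Q' Sig S T) (p : List (Sig × ℕ)) : Fn Q' S T :=
  fun θ F => { q | AccRel A θ F q p }

def HdZ (p : List (Sig × ℕ)) : Prop := ∀ x, p.head? = some x → x.2 = 0

lemma hdz_nil : HdZ ([] : List (Sig × ℕ)) := by intro x hx; simp [HdZ] at hx

lemma acc_iff (A : TwoStore Q' Sig S T) (q : Q') (p : List (Sig × ℕ)) :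
    TwoStoreAcc A q p ↔ AccRel A (env0 A) A.final q p := by
  constructor
  · intro h
    induction h with
    | empty h => exact .empty h
    | ex t h1 h2 h3 h4 _ ih => exact .ex t h1 h2 h3 h4 ih
    | all h1 h2 h3 ih => exact .all h1 h2 ih
  · intro h
    induction h with
    | empty h => exact .empty h
    | ex t h1 h2 h3 h4 _ ih => exact .ex t h1 h2 h3 h4 ih
    | all h1 h2 h3 ih => exact .all h1 h2 ih

lemma accRel_append {A : TwoStore Q' Sig S T} {θ F} {q : Q'}
    (p₁ p₂ : List (Sig × ℕ)) :
    AccRel A θ F q (p₁ ++ p₂) ↔ AccRel A θ (Phi A p₂ θ F) q p₁ := by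
  induction p₁ generalizing q with
  | nil =>
    simp only [List.nil_append]
    constructor
    · intro h; exact .empty h
    · intro h; cases h with | empty h => exact h
  | cons e rest ih =>
    obtain ⟨σ, m⟩ := e
    constructor
    · intro h
      cases h with
      | ex t h1 h2 h3 h4 h5 => exact .ex t h1 h2 h3 h4 (ih.mp h5)
      | all h1 h2 h3 => exact .all h1 h2 (fun t a b c => ih.mp (h3 t a b c))
    · intro h
      cases h with
      | ex t h1 h2 h3 h4 h5 => exact .ex t h1 h2 h3 h4 (ih.mpr h5)
      | all h1 h2 h3 => exact .all h1 h2 (fun t a b c => ih.mpr (h3 t a b c))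

lemma accRel_shift {A : TwoStore Q' Sig S T} {θ F} {q : Q'}
    {pl : List (Sig × ℕ)} (h : ∀ e ∈ pl, 1 ≤ e.2) :
    AccRel A θ F q pl ↔
      AccRel A (shiftEnv A θ) F q (pl.map fun e => (e.1, e.2 - 1)) := by
  induction pl generalizing q with
  | nil =>
    constructor
    · intro h'; cases h' with | empty hh => exact .empty hh
    · intro h'; cases h' with | empty hh => exact .empty hh
  | cons e rest ih =>
    obtain ⟨σ, m⟩ := e
    have hm : 1 ≤ m := h (σ, m) List.mem_cons_self
    have hrest : ∀ e ∈ rest, 1 ≤ e.2 := fun e he => h e (List.mem_cons_of_mem _ he)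
    have key : ∀ t : T, θ t ((A.chk t).next^[m] (A.chk t).init)
        ↔ shiftEnv A θ t ((A.chk t).next^[m - 1] (A.chk t).init) := by
      intro t
      have hiter : (A.chk t).next^[m] (A.chk t).init
          = (A.chk t).next ((A.chk t).next^[m - 1] (A.chk t).init) := by
        conv_lhs => rw [show m = (m - 1) + 1 from (Nat.succ_pred_eq_of_pos hm).symm]
        rw [Function.iterate_succ_apply']
      rw [hiter]; exact Iff.rfl
    simp only [List.map_cons]
    constructor
    · intro h'
      cases h' with
      | ex t h1 h2 h3 h4 h5 => exact .ex t h1 h2 h3 ((key t).mp h4) ((ih hrest).mp h5)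
      | all h1 h2 h3 =>
        obtain ⟨t, a, b, c⟩ := h2
        exact .all h1 ⟨t, a, b, (key t).mp c⟩
          (fun t a b c => (ih hrest).mp (h3 t a b ((key t).mpr c)))
    · intro h'
      cases h' with
      | ex t h1 h2 h3 h4 h5 => exact .ex t h1 h2 h3 ((key t).mpr h4) ((ih hrest).mpr h5)
      | all h1 h2 h3 =>
        obtain ⟨t, a, b, c⟩ := h2
        exact .all h1 ⟨t, a, b, (key t).mpr c⟩
          (fun t a b c => (ih hrest).mpr (h3 t a b ((key t).mp c)))

def zeroComb (A : TwoStore Q' Sig S T) (ts : Set T) (f' : Fn Q' S T) : Fn Q' S T :=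
  fun θ F =>
    { q | (A.exQ q = true ∧
            ∃ t, t ∈ ts ∧ A.src t = q ∧ θ t (A.chk t).init ∧ A.dst t ∈ f' θ F)
        ∨ (A.exQ q = false ∧ (∃ t, t ∈ ts ∧ A.src t = q ∧ θ t (A.chk t).init) ∧
            ∀ t, t ∈ ts → A.src t = q → θ t (A.chk t).init → A.dst t ∈ f' θ F) }

lemma phi_zero (A : TwoStore Q' Sig S T) (σ : Sig) (pr : List (Sig × ℕ)) :
    Phi A ((σ, 0) :: pr) = zeroComb A { t | A.sym t = σ } (Phi A pr) := by
  funext θ F; ext q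
  constructor
  · intro h
    cases h with
    | ex t h1 h2 h3 h4 h5 => exact Or.inl ⟨h1, t, h3, h2, h4, h5⟩
    | all h1 h2 h3 =>
      obtain ⟨t, a, b, c⟩ := h2
      exact Or.inr ⟨h1, ⟨t, b, a, c⟩, fun t ht hsrc hθ => h3 t hsrc ht hθ⟩
  · rintro (⟨h1, t, hts, hsrc, hθ, hdst⟩ | ⟨h1, ⟨t, hts, hsrc, hθ⟩, hall⟩)
    · exact .ex t h1 hsrc hts hθ hdst
    · exact .all h1 ⟨t, hsrc, hts, hθ⟩ (fun t a b c => hall t b a c)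

lemma phi_pos (A : TwoStore Q' Sig S T) {pl : List (Sig × ℕ)}
    (h : ∀ e ∈ pl, 1 ≤ e.2) (pr : List (Sig × ℕ)) (θ : T → S → Prop) (F : Set Q') :
    Phi A (pl ++ pr) θ F
      = Phi A (pl.map fun e => (e.1, e.2 - 1)) (shiftEnv A θ) (Phi A pr θ F) := by
  ext q
  constructor
  · intro hh; exact (accRel_shift h).mp ((accRel_append pl pr).mp hh)
  · intro hh; exact (accRel_append pl pr).mpr ((accRel_shift h).mpr hh)

def TR (A : TwoStore Q' Sig S T) (bot : Sig) (ι : Q → Q')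
    (a : Sig ⊕ Q) (sl sr s : St Q' S T) : Prop :=
  (∃ σ, a = Sum.inl σ ∧ (∃ e z f, sl = Sum.inl (e, z, f) ∧ e)
      ∧ (∃ e z f, sr = Sum.inl (e, z, f) ∧ e)
      ∧ s = Sum.inr (Sum.inl { t | A.sym t = σ }))
  ∨ (a = Sum.inl bot ∧ ∃ ts e' z' f', sl = Sum.inr (Sum.inl ts) ∧
      sr = Sum.inl (e', z', f') ∧
      ∃ e z, ¬e ∧ z ∧ s = Sum.inl (e, z, zeroComb A ts f'))
  ∨ (a = Sum.inl bot ∧ ∃ el zl fl er zr fr, sl = Sum.inl (el, zl, fl) ∧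
      sr = Sum.inl (er, zr, fr) ∧ ¬el ∧ zr ∧
      ∃ e z, ¬e ∧ ¬z ∧ s = Sum.inl (e, z, fun θ F => fl (shiftEnv A θ) (fr θ F)))
  ∨ (∃ q, a = Sum.inr q ∧ ∃ e z f, sl = Sum.inl (e, z, f) ∧
      (∃ er zr fr, sr = Sum.inl (er, zr, fr) ∧ er) ∧
      ∃ P, (P ↔ ι q ∈ f (env0 A) A.final) ∧ s = Sum.inr (Sum.inr P))

def theAut (A : TwoStore Q' Sig S T) (bot : Sig) (ι : Q → Q') :
    TreeAut (Sig ⊕ Q) (St Q' S T) where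
  leaf := { s | ∃ e z f, s = Sum.inl (e, z, f) ∧ e ∧ z ∧ f = Phi A [] }
  trans := fun a sl sr => { s | TR A bot ι a sl sr s }
  accept := { s | ∃ P, s = Sum.inr (Sum.inr P) ∧ P }

lemma encodes_nil_eq {bot : Sig} {p : List (Sig × ℕ)} {t : BTree (Sig ⊕ Q)}
    (h : Encodes bot p t) (hp : p = []) : t = .nil := by
  cases h with
  | nil => rfl
  | zero _ => simp at hp
  | pos hne _ _ _ _ => exact absurd (List.append_eq_nil_iff.mp hp).1 hne

end Pf
end Enc

namespace Enc
namespace Pf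

variable {Q Q' Sig S T : Type}

lemma sound (A : TwoStore Q' Sig S T) (bot : Sig) (ι : Q → Q')
    {t : BTree (Sig ⊕ Q)} {s : St Q' S T}
    (h : TreeAutEval (theAut A bot ι) t s) :
    (∀ e z f, s = Sum.inl (e, z, f) →
      ∃ p, Encodes bot p t ∧ (e ↔ p = []) ∧ (z ↔ HdZ p) ∧ f = Phi A p) ∧
    (∀ ts, s = Sum.inr (Sum.inl ts) →
      ∃ σ : Sig, t = .node (Sum.inl σ) .nil .nil ∧ ts = { u | A.sym u = σ }) ∧
    (∀ P, s = Sum.inr (Sum.inr P) →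
      ∃ q p tp, t = .node (Sum.inr q) tp .nil ∧ Encodes bot p tp ∧
        (P ↔ AccRel A (env0 A) A.final (ι q) p)) := by
  induction h with
  | nil hs =>
    obtain ⟨e, z, f, rfl, he, hz, hf⟩ := hs
    refine ⟨?_, ?_, ?_⟩
    · rintro e' z' f' heq
      simp only [Sum.inl.injEq, Prod.mk.injEq] at heq
      obtain ⟨rfl, rfl, rfl⟩ := heq
      exact ⟨[], .nil, ⟨fun _ => rfl, fun _ => he⟩, ⟨fun _ => hdz_nil, fun _ => hz⟩, hf⟩
    · intro ts heq; simp at heq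
    · intro P heq; simp at heq
  | @node a l r sl sr s hl hr hmem ihl ihr =>
    rcases hmem with
        ⟨σ, rfl, ⟨el, zl, fl, rfl, hel⟩, ⟨er, zr, fr, rfl, her⟩, rfl⟩
      | ⟨rfl, ts, e', z', f', rfl, rfl, e, z, hne, hz, rfl⟩
      | ⟨rfl, el, zl, fl, er, zr, fr, rfl, rfl, hnel, hzr, e, z, hne, hnz, rfl⟩
      | ⟨q, rfl, e, z, f, rfl, ⟨er, zr, fr, rfl, her⟩, P, hP, rfl⟩
    · -- symbol leaf
      refine ⟨?_, ?_, ?_⟩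
      · intro e' z' f' heq; simp at heq
      · intro ts heq
        simp only [Sum.inr.injEq, Sum.inl.injEq] at heq; subst heq
        obtain ⟨pl, hencl, hiffl, _, _⟩ := ihl.1 el zl fl rfl
        obtain ⟨pr, hencr, hiffr, _, _⟩ := ihr.1 er zr fr rfl
        have : l = .nil := encodes_nil_eq hencl (hiffl.mp hel)
        have : r = .nil := encodes_nil_eq hencr (hiffr.mp her)
        exact ⟨σ, by simp_all, rfl⟩
      · intro P heq; simp at heq
    · -- zero node
      refine ⟨?_, ?_, ?_⟩
      · intro e₀ z₀ f₀ heq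
        simp only [Sum.inl.injEq, Prod.mk.injEq] at heq
        obtain ⟨rfl, rfl, rfl⟩ := heq
        obtain ⟨σ, rfl, rfl⟩ := ihl.2.1 ts rfl
        obtain ⟨pr, hencr, _, _, rfl⟩ := ihr.1 e' z' f' rfl
        refine ⟨(σ, 0) :: pr, Encodes.zero hencr, ?_, ?_, (phi_zero A σ pr).symm⟩
        · exact ⟨fun hh => absurd hh hne, fun hh => absurd hh (by simp)⟩
        · refine ⟨fun _ x hx => ?_, fun _ => hz⟩
          simp only [List.head?_cons, Option.some.injEq] at hx
          subst hx; rfl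
      · intro ts heq; simp at heq
      · intro P heq; simp at heq
    · -- pos node
      refine ⟨?_, ?_, ?_⟩
      · intro e₀ z₀ f₀ heq
        simp only [Sum.inl.injEq, Prod.mk.injEq] at heq
        obtain ⟨rfl, rfl, rfl⟩ := heq
        obtain ⟨pl', hencl, hiffl, _, rfl⟩ := ihl.1 el zl fl rfl
        obtain ⟨pr, hencr, _, hiffzr, rfl⟩ := ihr.1 er zr fr rfl
        have hpl' : pl' ≠ [] := fun hh => hnel (hiffl.mpr hh)
        set pl : List (Sig × ℕ) := pl'.map (fun e => (e.1, e.2 + 1)) with hpl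
        have hmap : pl.map (fun e => (e.1, e.2 - 1)) = pl' := by
          simp [hpl, List.map_map, Function.comp_def]
        have hplne : pl ≠ [] := by
          simp only [hpl, ne_eq, List.map_eq_nil_iff]; exact hpl'
        have hge : ∀ e ∈ pl, 1 ≤ e.2 := by
          simp only [hpl, List.mem_map]
          rintro e ⟨x, _, rfl⟩; exact Nat.le_add_left 1 x.2
        refine ⟨pl ++ pr, Encodes.pos hplne hge (fun x hx => hiffzr.mp hzr x hx)
            (hmap ▸ hencl) hencr, ?_, ?_, ?_⟩
        · constructor
          · intro hh; exact absurd hh hne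
          · intro hh; exact absurd (List.append_eq_nil_iff.mp hh).1 hplne
        · constructor
          · intro hh; exact absurd hh hnz
          · intro hh
            exfalso
            obtain ⟨x, pl'', rfl⟩ := List.exists_cons_of_ne_nil hpl'
            have := hh (x.1, x.2 + 1) (by simp [hpl])
            simp at this
        · funext θ F
          rw [phi_pos A hge pr θ F, hmap]
      · intro ts heq; simp at heq
      · intro P heq; simp at heq
    · -- root node
      refine ⟨?_, ?_, ?_⟩
      · intro e₀ z₀ f₀ heq; simp at heq
      · intro ts heq; simp at heq
      · intro P₀ heq
        simp only [Sum.inr.injEq] at heq; subst heq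
        obtain ⟨p, hencl, _, _, rfl⟩ := ihl.1 e z f rfl
        obtain ⟨pr, hencr, hiffr, _, _⟩ := ihr.1 er zr fr rfl
        have hrnil : r = .nil := encodes_nil_eq hencr (hiffr.mp her)
        subst hrnil
        exact ⟨q, p, l, rfl, hencl, hP⟩

end Pf
end Enc

namespace Enc
namespace Pf

variable {Q Q' Sig S T : Type}

lemma nil_eval (A : TwoStore Q' Sig S T) (bot : Sig) (ι : Q → Q') :
    TreeAutEval (theAut A bot ι) (.nil : BTree (Sig ⊕ Q))
      (Sum.inl ((([] : List (Sig × ℕ)) = []), HdZ ([] : List (Sig × ℕ)), Phi A [])) :=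
  .nil ⟨_, _, _, rfl, rfl, hdz_nil, rfl⟩

lemma enc_eval (A : TwoStore Q' Sig S T) (bot : Sig) (ι : Q → Q')
    {p : List (Sig × ℕ)} {t : BTree (Sig ⊕ Q)} (h : Encodes bot p t) :
    TreeAutEval (theAut A bot ι) t (Sum.inl ((p = []), HdZ p, Phi A p)) := by
  induction h with
  | nil => exact nil_eval A bot ι
  | @zero σ pr tr henc ih =>
    have hleafσ : TreeAutEval (theAut A bot ι) (.node (Sum.inl σ) .nil .nil)
        (Sum.inr (Sum.inl { u | A.sym u = σ })) :=
      .node (nil_eval A bot ι) (nil_eval A bot ι)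
        (Or.inl ⟨σ, rfl, ⟨_, _, _, rfl, rfl⟩, ⟨_, _, _, rfl, rfl⟩, rfl⟩)
    refine .node hleafσ ih (Or.inr (Or.inl ⟨rfl, { u | A.sym u = σ }, _, _, _, rfl, rfl,
      ((σ, 0) :: pr = []), HdZ ((σ, 0) :: pr), by simp, ?_, ?_⟩))
    · intro x hx
      simp only [List.head?_cons, Option.some.injEq] at hx
      subst hx; rfl
    · rw [phi_zero A σ pr]
  | @pos pl pr tl tr hne hge hhd hencl hencr ihl ihr =>
    have hplne : pl.map (fun e => (e.1, e.2 - 1)) ≠ [] := by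
      simp only [ne_eq, List.map_eq_nil_iff]; exact hne
    refine .node ihl ihr (Or.inr (Or.inr (Or.inl ⟨rfl, _, _, _, _, _, _, rfl, rfl,
      hplne, hhd, (pl ++ pr = []), HdZ (pl ++ pr), ?_, ?_, ?_⟩)))
    · intro hh; exact hne (List.append_eq_nil_iff.mp hh).1
    · intro hh
      obtain ⟨x, pl', rfl⟩ := List.exists_cons_of_ne_nil hne
      have h1 : 1 ≤ x.2 := hge x List.mem_cons_self
      have := hh x (by simp)
      omega
    · have hphi : Phi A (pl ++ pr) = fun θ F =>
          Phi A (pl.map fun e => (e.1, e.2 - 1)) (shiftEnv A θ) (Phi A pr θ F) := by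
        funext θ F; exact phi_pos A hge pr θ F
      rw [hphi]

end Pf
end Enc


/-- Every 2-store-regular set of level-2 counter
configurations is E-regular: if `C` is accepted by a 2-store automaton, then
the set of tree encodings `{E(c) : c ∈ C}` is a regular tree language. -/
theorem twostore_regular_implies_eregular {Q Sig : Type} (bot : Sig)
    (C : Set (Q × List (Sig × ℕ))) (h : Enc.TwoStoreRegular C) :
    Enc.TreeRegular (Enc.EncImage bot C) := by

  classical
  obtain ⟨Q', S, T, fQ', fS, fT, A, ι, hC⟩ := h
  haveI : DecidableEq S := Classical.typeDecidableEq S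
  haveI : DecidableEq T := Classical.typeDecidableEq T
  haveI : DecidableEq Q' := Classical.typeDecidableEq Q'
  haveI : DecidableEq (T → S → Prop) := Classical.typeDecidableEq _
  haveI : DecidableEq (Set Q') := Classical.typeDecidableEq _
  refine ⟨Enc.Pf.St Q' S T, inferInstance, Enc.Pf.theAut A bot ι, ?_⟩
  ext t
  constructor
  · rintro ⟨⟨q, p⟩, hc, tp, henc, rfl⟩
    have hacc : Enc.TwoStoreAcc A (ι q) p := by
      have := hC ▸ hc; exact this
    refine ⟨Sum.inr (Sum.inr (ι q ∈ Enc.Pf.Phi A p (Enc.Pf.env0 A) A.final)),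
      ⟨_, rfl, (Enc.Pf.acc_iff A (ι q) p).mp hacc⟩, ?_⟩
    exact .node (Enc.Pf.enc_eval A bot ι henc) (Enc.Pf.nil_eval A bot ι)
      (Or.inr (Or.inr (Or.inr ⟨q, rfl, _, _, _, rfl,
        ⟨_, _, _, rfl, rfl⟩, _, Iff.rfl, rfl⟩)))
  · rintro ⟨s, ⟨P, rfl, hP⟩, hev⟩
    obtain ⟨q, p, tp, rfl, henc, hiff⟩ :=
      (Enc.Pf.sound A bot ι hev).2.2 P rfl
    refine ⟨(q, p), ?_, tp, henc, rfl⟩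
    rw [hC]
    exact (Enc.Pf.acc_iff A (ι q) p).mpr (hiff.mp hP)
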